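/- Let y ∈ ℝⁿ, Z ∈ ℝ^{n×ℓ} with full row rank (rank(Z) = n), U ∈ ℝ^{n×r} with full column rank (rank(U) = r < n), and T ∈ ℝ^{n×m} with full column rank (rank(T) = m < n). Let W = [Z, U] ∈ ℝ^{n×(ℓ+r)} be the column-wise concatenation. Define τ̂ = (Tᵀ G_W T)† (Tᵀ G_W y), τ̃ = (Tᵀ G_Z T)† (Tᵀ G_Z y), δ̂ = (Tᵀ G_Z T)† (Tᵀ G_Z U), and γ̂ = Uᵀ G_W (y − T τ̂). Then τ̃ − τ̂ = δ̂ γ̂. -/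

import Mathlib

open Matrix BigOperators

noncomputable section

/-- `B` is the Moore–Penrose pseudoinverse of `A`. -/
def IsMPInv {m n : Type*} [Fintype m] [Fintype n]
    (A : Matrix m n ℝ) (B : Matrix n m ℝ) : Prop :=
  A * B * A = A ∧ B * A * B = B ∧ (A * B)ᵀ = A * B ∧ (B * A)ᵀ = B * A


lemma rank_fin_isUnit {k : ℕ} (A : Matrix (Fin k) (Fin k) ℝ) (h : A.rank = k) : IsUnit A := by
  rw [← Matrix.mulVec_surjective_iff_isUnit]
  have hr : LinearMap.range A.mulVecLin = ⊤ := by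
    apply Submodule.eq_top_of_finrank_eq
    rw [show Module.finrank ℝ (LinearMap.range A.mulVecLin) = A.rank from rfl, h,
      Module.finrank_fintype_fun_eq_card, Fintype.card_fin]
  intro v
  obtain ⟨x, hx⟩ := LinearMap.range_eq_top.mp hr v
  exact ⟨x, hx⟩

lemma mulVec_inj_of_rank {a b : ℕ} (T : Matrix (Fin a) (Fin b) ℝ) (h : T.rank = b) :
    ∀ x, T *ᵥ x = 0 → x = 0 := by
  have hker : LinearMap.ker T.mulVecLin = ⊥ := by
    have h2 := LinearMap.finrank_range_add_finrank_ker T.mulVecLin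
    rw [show Module.finrank ℝ (LinearMap.range T.mulVecLin) = T.rank from rfl, h,
      Module.finrank_fintype_fun_eq_card, Fintype.card_fin] at h2
    have : Module.finrank ℝ (LinearMap.ker T.mulVecLin) = 0 := by omega
    exact Submodule.finrank_eq_zero.mp this
  intro x hx
  have : x ∈ LinearMap.ker T.mulVecLin := hx
  simpa [hker] using this

lemma mp_unit {k : ℕ} {A B : Matrix (Fin k) (Fin k) ℝ} (hA : IsUnit A)
    (h : IsMPInv A B) : A * B = 1 ∧ B * A = 1 := by
  have hdet := (Matrix.isUnit_iff_isUnit_det A).mp hA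
  have h1 : A * A⁻¹ = 1 := Matrix.mul_nonsing_inv A hdet
  have h2 : A⁻¹ * A = 1 := Matrix.nonsing_inv_mul A hdet
  constructor
  · have := congrArg (· * A⁻¹) h.1
    simpa [Matrix.mul_assoc, h1] using this
  · have := congrArg (A⁻¹ * ·) h.1
    simpa [← Matrix.mul_assoc, h2] using this

lemma posDef_of_psd_isUnit {k : ℕ} {A : Matrix (Fin k) (Fin k) ℝ}
    (h1 : A.PosSemidef) (h2 : IsUnit A) : A.PosDef := by
  refine Matrix.posDef_iff_dotProduct_mulVec.mpr ⟨h1.1, fun x hx => ?_⟩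
  have hinj : Function.Injective A.mulVec := Matrix.mulVec_injective_iff_isUnit.mpr h2
  have hne : A *ᵥ x ≠ 0 := by
    intro hc
    exact hx (hinj (by simpa using hc))
  rcases lt_or_eq_of_le (h1.dotProduct_mulVec_nonneg x) with h | h
  · exact h
  · exact absurd ((h1.dotProduct_mulVec_zero_iff x).mp h.symm) hne

lemma posSemidef_self_mul_transpose' {a b : ℕ} (A : Matrix (Fin a) (Fin b) ℝ) :
    (A * Aᵀ).PosSemidef := by
  have := Matrix.posSemidef_self_mul_conjTranspose A
  rwa [Matrix.conjTranspose_eq_transpose_of_trivial] at this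

lemma posDef_conj_full {k b : ℕ} {M : Matrix (Fin k) (Fin k) ℝ} (hM : M.PosDef)
    (T : Matrix (Fin k) (Fin b) ℝ) (hT : ∀ x, T *ᵥ x = 0 → x = 0) :
    (Tᵀ * M * T).PosDef := by
  have hpsd : (Tᵀ * M * T).PosSemidef := by
    have := hM.posSemidef.conjTranspose_mul_mul_same T
    rwa [Matrix.conjTranspose_eq_transpose_of_trivial] at this
  refine Matrix.posDef_iff_dotProduct_mulVec.mpr ⟨hpsd.1, fun x hx => ?_⟩
  have hTx : T *ᵥ x ≠ 0 := fun hc => hx (hT x hc)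
  have key : star x ⬝ᵥ (Tᵀ * M * T) *ᵥ x = star (T *ᵥ x) ⬝ᵥ M *ᵥ (T *ᵥ x) := by
    simp only [star_trivial, ← Matrix.mulVec_mulVec]
    rw [Matrix.dotProduct_mulVec x Tᵀ, Matrix.vecMul_transpose]
  rw [key]
  exact hM.dotProduct_mulVec_pos hTx

theorem cochran_tau
    {n l r m : ℕ}
    (y : Fin n → ℝ)
    (Z : Matrix (Fin n) (Fin l) ℝ) (U : Matrix (Fin n) (Fin r) ℝ)
    (T : Matrix (Fin n) (Fin m) ℝ)
    (hZ : Z.rank = n)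
    (hU : U.rank = r) (hrn : r < n)
    (hT : T.rank = m) (hmn : m < n)
    -- `W = [Z, U]` is the column-wise concatenation
    (W : Matrix (Fin n) (Fin l ⊕ Fin r) ℝ) (hW : W = Matrix.fromCols Z U)
    -- inverse Gram matrices `G_W = (W Wᵀ)†` and `G_Z = (Z Zᵀ)†`
    (GW : Matrix (Fin n) (Fin n) ℝ) (hGW : IsMPInv (W * Wᵀ) GW)
    (GZ : Matrix (Fin n) (Fin n) ℝ) (hGZ : IsMPInv (Z * Zᵀ) GZ)
    (B1 : Matrix (Fin m) (Fin m) ℝ) (hB1 : IsMPInv (Tᵀ * GW * T) B1)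
    (B2 : Matrix (Fin m) (Fin m) ℝ) (hB2 : IsMPInv (Tᵀ * GZ * T) B2)
    -- τ̂ = (Tᵀ G_W T)† (Tᵀ G_W y)
    (τh : Fin m → ℝ) (hτh : τh = B1 *ᵥ ((Tᵀ * GW) *ᵥ y))
    -- τ̃ = (Tᵀ G_Z T)† (Tᵀ G_Z y)
    (τt : Fin m → ℝ) (hτt : τt = B2 *ᵥ ((Tᵀ * GZ) *ᵥ y))
    -- δ̂ = (Tᵀ G_Z T)† (Tᵀ G_Z U)
    (δh : Matrix (Fin m) (Fin r) ℝ) (hδh : δh = B2 * (Tᵀ * GZ * U))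
    -- γ̂ = Uᵀ G_W (y − T τ̂)
    (γh : Fin r → ℝ) (hγh : γh = (Uᵀ * GW) *ᵥ (y - T *ᵥ τh)) :
    τt - τh = δh *ᵥ γh := by
  -- basic invertibility facts
  have hWWt : W * Wᵀ = Z * Zᵀ + U * Uᵀ := by
    rw [hW, Matrix.transpose_fromCols, Matrix.fromCols_mul_fromRows]
  have hZZu : IsUnit (Z * Zᵀ) :=
    rank_fin_isUnit _ (by rw [Matrix.rank_self_mul_transpose, hZ])
  have hZZpd : (Z * Zᵀ).PosDef := posDef_of_psd_isUnit (posSemidef_self_mul_transpose' Z) hZZu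
  have hWWpd : (W * Wᵀ).PosDef := by
    rw [hWWt]; exact hZZpd.add_posSemidef (posSemidef_self_mul_transpose' U)
  have hWWu : IsUnit (W * Wᵀ) := hWWpd.isUnit
  have hGZ1 := mp_unit hZZu hGZ
  have hGW1 := mp_unit hWWu hGW
  have hGWpd : GW.PosDef := by
    have : (W * Wᵀ)⁻¹ = GW := Matrix.inv_eq_right_inv hGW1.1
    rw [← this]; exact hWWpd.inv
  have hGZpd : GZ.PosDef := by
    have : (Z * Zᵀ)⁻¹ = GZ := Matrix.inv_eq_right_inv hGZ1.1
    rw [← this]; exact hZZpd.inv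
  have hTinj := mulVec_inj_of_rank T hT
  have hB1e := mp_unit (posDef_conj_full hGWpd T hTinj).isUnit hB1
  have hB2e := mp_unit (posDef_conj_full hGZpd T hTinj).isUnit hB2
  -- key matrix identity
  have key : GZ * (U * Uᵀ) * GW = GZ - GW := by
    have h1 : GZ * (W * Wᵀ) * GW = GW + GZ * (U * Uᵀ) * GW := by
      rw [hWWt, Matrix.mul_add, Matrix.add_mul, hGZ1.2, Matrix.one_mul]
    have h2 : GZ * (W * Wᵀ) * GW = GZ := by
      rw [Matrix.mul_assoc, hGW1.1, Matrix.mul_one]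
    rw [h2] at h1
    rw [eq_sub_iff_add_eq, add_comm]
    exact h1.symm
  -- residual orthogonality
  set e : Fin n → ℝ := y - T *ᵥ τh with he
  have h0 : (Tᵀ * GW) *ᵥ e = 0 := by
    rw [he, Matrix.mulVec_sub, hτh]
    simp only [Matrix.mulVec_mulVec]
    rw [show Tᵀ * GW * (T * (B1 * (Tᵀ * GW))) = Tᵀ * GW * T * B1 * (Tᵀ * GW) by
      simp [Matrix.mul_assoc], hB1e.1, Matrix.one_mul, sub_self]
  -- final computation
  rw [hδh, hγh]
  have hcol : B2 * (Tᵀ * GZ * U) * (Uᵀ * GW) = B2 * (Tᵀ * GZ) - B2 * (Tᵀ * GW) := by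
    have : Tᵀ * GZ * U * (Uᵀ * GW) = Tᵀ * (GZ * (U * Uᵀ) * GW) := by
      simp [Matrix.mul_assoc]
    rw [Matrix.mul_assoc B2, this, key, Matrix.mul_sub, Matrix.mul_sub]
  rw [Matrix.mulVec_mulVec, hcol, Matrix.sub_mulVec]
  have hzero : (B2 * (Tᵀ * GW)) *ᵥ e = 0 := by
    rw [← Matrix.mulVec_mulVec, h0, Matrix.mulVec_zero]
  rw [hzero, sub_zero, ← Matrix.mulVec_mulVec, he, Matrix.mulVec_sub, Matrix.mulVec_sub,
    hτt, Matrix.mulVec_mulVec]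
  congr 1
  rw [hτh]
  simp only [Matrix.mulVec_mulVec]
  rw [show B2 * (Tᵀ * GZ * (T * (B1 * (Tᵀ * GW)))) = (B2 * (Tᵀ * GZ * T)) * (B1 * (Tᵀ * GW)) by
    simp [Matrix.mul_assoc], hB2e.2, Matrix.one_mul]
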